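/- For every K ⊆ {1,...,d} with 2 ≤ |K| ≤ d, every K-countermonotonic copula is Kendall-countermonotonic: 𝒞_{K-CM} ⊆ 𝒞_{τ-CM}. -/

import Mathlib

open MeasureTheory unitInterval

/-- The unit cube `[0,1]^d`, modelled as functions `Fin d → [0,1]`. -/
abbrev Cube (d : ℕ) : Type := Fin d → unitInterval

/-- `η_K(u,v)`: the vector whose `k`-th coordinate is `v k` if `k ∈ K` and `u k` otherwise. -/
def etaK {d : ℕ} (K : Finset (Fin d)) (u v : Cube d) : Cube d :=
  fun k => if k ∈ K then v k else u k

/-- `C` is a `d`-dimensional copula. -/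
def IsCopula {d : ℕ} (C : Cube d → ℝ) : Prop :=
  (∀ u v : Cube d, u ≤ v →
      0 ≤ ∑ K : Finset (Fin d), (-1 : ℝ) ^ (d - K.card) * C (etaK K u v)) ∧
  (∀ k : Fin d, ∀ u : Cube d, C (etaK {k} u 0) = 0) ∧
  (∀ k : Fin d, ∀ u : Cube d, C (etaK {k} 1 u) = (u k : ℝ))

/-- The reflection `ν_K`, i.e. the composition of the commuting reflections `ν_k`, `k ∈ K`,
written in closed (inclusion–exclusion) form: the coordinates in `L ⊆ K` are reflected to
`1 - u k`, the remaining coordinates of `K` are set to `1`. -/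
noncomputable def nuK {d : ℕ} (K : Finset (Fin d)) (C : Cube d → ℝ) : Cube d → ℝ :=
  fun u => ∑ L ∈ K.powerset, (-1 : ℝ) ^ L.card *
    C (fun k => if k ∈ L then unitInterval.symm (u k) else if k ∈ K then 1 else u k)

/-- The total reflection `τ = ν_{{1,...,d}}`, sending a copula to its survival copula. -/
noncomputable def survival {d : ℕ} (C : Cube d → ℝ) : Cube d → ℝ := nuK Finset.univ C

/-- The concordance order `C ⪯ D`: `C(u) ≤ D(u)` and `(τ C)(u) ≤ (τ D)(u)` for all `u`. -/
def ConcLE {d : ℕ} (C D : Cube d → ℝ) : Prop :=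
  (∀ u, C u ≤ D u) ∧ (∀ u, survival C u ≤ survival D u)

/-- A minimal copula: a minimal element of the set of all copulas w.r.t. concordance order. -/
def IsMinimalCopula {d : ℕ} (C : Cube d → ℝ) : Prop :=
  IsCopula C ∧ ∀ D : Cube d → ℝ, IsCopula D → ConcLE D C → D = C

/-- `μ` is the copula measure `Q^C` of `C`: a Borel probability measure on the cube
with `μ [0,u] = C u` for all `u`. -/
def IsCopulaMeasure {d : ℕ} (C : Cube d → ℝ) (μ : Measure (Cube d)) : Prop :=
  IsProbabilityMeasure μ ∧ ∀ u : Cube d, μ (Set.Icc 0 u) = ENNReal.ofReal (C u)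

/-- `C` is `K`-countermonotonic: there are strictly increasing continuous functions
`g k : [0,1] → ℝ` (`k ∈ K`) and `c : ℝ` with `Q^C {u : ∑ k ∈ K, g k (u k) = c} = 1`. -/
def IsKCM {d : ℕ} (K : Finset (Fin d)) (C : Cube d → ℝ) : Prop :=
  ∃ (g : Fin d → unitInterval → ℝ) (c : ℝ),
    (∀ k ∈ K, StrictMono (g k) ∧ Continuous (g k)) ∧
    ∃ μ : Measure (Cube d), IsCopulaMeasure C μ ∧
      μ {u : Cube d | ∑ k ∈ K, g k (u k) = c} = 1

/-- `C` is Kendall-countermonotonic (`τ`-CM):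
`min (C u) ((τ C)(1 - u)) = 0` for every `u` with `0 < u < 1` coordinatewise. -/
noncomputable def IsTauCM {d : ℕ} (C : Cube d → ℝ) : Prop :=
  ∀ u : Cube d, (∀ k, 0 < u k ∧ u k < 1) →
    min (C u) (survival C (fun k => unitInterval.symm (u k))) = 0

/-- The upper Fréchet–Hoeffding bound `M(u) = min {u_1, ..., u_d}`. -/
noncomputable def Mcop {d : ℕ} : Cube d → ℝ :=
  fun u => sInf (Set.range fun k => (u k : ℝ))


lemma aux_IE {α ι : Type*} [MeasurableSpace α] [DecidableEq ι] (A : ι → Set α)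
    (hA : ∀ i, MeasurableSet (A i)) (s : Finset ι) :
    ∀ (μ : Measure α), IsFiniteMeasure μ →
      (μ (⋂ i ∈ s, (A i)ᶜ)).toReal
        = ∑ L ∈ s.powerset, (-1:ℝ)^L.card * (μ (⋂ i ∈ L, A i)).toReal := by
  classical
  induction s using Finset.induction_on with
  | empty => intro μ _; simp
  | insert a s ha ih =>
    intro μ hμ
    haveI := hμ
    have hbi : ∀ (t : Finset ι), MeasurableSet (⋂ i ∈ t, A i) :=
      fun t => MeasurableSet.biInter t.countable_toSet (fun i _ => hA i)
    have hbc : MeasurableSet (⋂ i ∈ s, (A i)ᶜ) :=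
      MeasurableSet.biInter s.countable_toSet (fun i _ => (hA i).compl)
    rw [Finset.sum_powerset_insert ha]
    have h2 : ∑ L ∈ s.powerset, (-1:ℝ)^(insert a L).card * (μ (⋂ i ∈ insert a L, A i)).toReal
        = -∑ L ∈ s.powerset, (-1:ℝ)^L.card * ((μ.restrict (A a)) (⋂ i ∈ L, A i)).toReal := by
      rw [← Finset.sum_neg_distrib]
      refine Finset.sum_congr rfl ?_
      intro L hL
      have haL : a ∉ L := fun h => ha (Finset.mem_powerset.mp hL h)
      rw [Finset.card_insert_of_notMem haL, Measure.restrict_apply (hbi L),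
        Finset.set_biInter_insert, Set.inter_comm]
      ring
    rw [h2, ← ih μ hμ, ← ih (μ.restrict (A a)) inferInstance,
      Measure.restrict_apply hbc, Finset.set_biInter_insert]
    have E := measure_inter_add_diff (μ := μ) (⋂ i ∈ s, (A i)ᶜ) (hA a)
    have hfin1 : μ ((⋂ i ∈ s, (A i)ᶜ) ∩ A a) ≠ ⊤ := measure_ne_top _ _
    have hfin2 : μ ((⋂ i ∈ s, (A i)ᶜ) \ A a) ≠ ⊤ := measure_ne_top _ _
    have E' := congrArg ENNReal.toReal E
    rw [ENNReal.toReal_add hfin1 hfin2] at E'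
    have hset : (A a)ᶜ ∩ ⋂ i ∈ s, (A i)ᶜ = (⋂ i ∈ s, (A i)ᶜ) \ A a := by
      rw [Set.diff_eq, Set.inter_comm]
    rw [hset]
    linarith

/-- Every `K`-countermonotonic copula (`2 ≤ |K| ≤ d`) is Kendall-countermonotonic. -/
theorem stmt10 (d : ℕ) (hd : 2 ≤ d) (K : Finset (Fin d)) (hK : 2 ≤ K.card)
    (C : Cube d → ℝ) (hC : IsCopula C) (hCM : IsKCM K C) :
    IsTauCM C := by
  classical
  obtain ⟨g, c, hg, μ, ⟨hprob, hbox⟩, hH⟩ := hCM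
  haveI := hprob
  intro u _hu
  -- C vanishes when some coordinate is 0
  have hzero : ∀ w : Cube d, (∃ k, w k = 0) → C w = 0 := by
    rintro w ⟨k, hk⟩
    have hw : w = etaK {k} w 0 := by
      funext j
      simp only [etaK, Finset.mem_singleton]
      by_cases h : j = k
      · subst h; simpa using hk
      · simp [h]
    rw [hw, hC.2.1 k w]
  -- C is nonnegative
  have hnonneg : ∀ w : Cube d, 0 ≤ C w := by
    intro w
    have h0w : (0 : Cube d) ≤ w := fun k => unitInterval.nonneg'
    have h := hC.1 0 w h0w
    rw [Finset.sum_eq_single (Finset.univ : Finset (Fin d))] at h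
    · have hew : etaK Finset.univ (0 : Cube d) w = w := by
        funext k; simp [etaK]
      rw [hew] at h
      simpa using h
    · intro J _ hJne
      obtain ⟨k, hk⟩ : ∃ k, k ∉ J := by
        by_contra hcon
        push_neg at hcon
        exact hJne (Finset.eq_univ_iff_forall.mpr hcon)
      have hz : C (etaK J 0 w) = 0 := hzero _ ⟨k, by simp [etaK, hk]⟩
      simp [hz]
    · simp
  have hCtoReal : ∀ w : Cube d, C w = (μ (Set.Icc 0 w)).toReal := by
    intro w; rw [hbox w, ENNReal.toReal_ofReal (hnonneg w)]
  -- the slabs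
  set A : Fin d → Set (Cube d) :=
    fun k => (fun a : Cube d => (a k : ℝ)) ⁻¹' Set.Iic (u k : ℝ) with hA_def
  have hAm : ∀ k, MeasurableSet (A k) := by
    intro k
    exact (measurable_subtype_coe.comp (measurable_pi_apply k)) measurableSet_Iic
  -- boxes as intersections of slabs
  have hbox_eq : ∀ L : Finset (Fin d),
      (⋂ i ∈ L, A i) = Set.Icc (0 : Cube d) (fun k => if k ∈ L then u k else 1) := by
    intro L
    ext a
    simp only [Set.mem_iInter, Set.mem_preimage, Set.mem_Iic, Set.mem_Icc, hA_def]
    constructor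
    · intro h
      refine ⟨fun k => unitInterval.nonneg', fun k => ?_⟩
      by_cases hk : k ∈ L
      · simp only [hk, if_true]; exact_mod_cast h k hk
      · simp only [hk, if_false]; exact unitInterval.le_one'
    · intro ⟨_, h2⟩ k hk
      have h3 : a k ≤ (if k ∈ L then u k else 1) := h2 k
      rw [if_pos hk] at h3
      exact_mod_cast h3
  have hmIcc : ∀ w : Cube d, MeasurableSet (Set.Icc (0 : Cube d) w) := by
    intro w
    have : Set.Icc (0 : Cube d) w
        = ⋂ k, (fun a : Cube d => (a k : ℝ)) ⁻¹' Set.Iic (w k : ℝ) := by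
      ext a
      simp only [Set.mem_Icc, Set.mem_iInter, Set.mem_preimage, Set.mem_Iic]
      constructor
      · intro ⟨_, h2⟩ k; exact_mod_cast h2 k
      · intro h
        exact ⟨fun k => unitInterval.nonneg', fun k => by exact_mod_cast h k⟩
    rw [this]
    exact MeasurableSet.iInter fun k =>
      (measurable_subtype_coe.comp (measurable_pi_apply k)) measurableSet_Iic
  -- the open upper box
  set B : Set (Cube d) := {a : Cube d | ∀ k, u k < a k} with hB_def
  have hBm : MeasurableSet B := by
    have : B = ⋂ i ∈ (Finset.univ : Finset (Fin d)), (A i)ᶜ := by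
      ext a
      simp only [hB_def, Set.mem_setOf_eq, Set.mem_iInter, Set.mem_compl_iff,
        Set.mem_preimage, Set.mem_Iic, Finset.mem_univ, hA_def, Set.iInter_true, not_le,
        forall_const]
      exact ⟨fun h k => by exact_mod_cast h k, fun h k => by exact_mod_cast h k⟩
    rw [this]
    exact MeasurableSet.biInter (Set.to_countable _) (fun i _ => (hAm i).compl)
  -- survival value equals the measure of the open upper box
  have hSB : survival C (fun k => unitInterval.symm (u k)) = (μ B).toReal := by
    have hB' : B = ⋂ i ∈ (Finset.univ : Finset (Fin d)), (A i)ᶜ := by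
      ext a
      simp only [hB_def, Set.mem_setOf_eq, Set.mem_iInter, Set.mem_compl_iff,
        Set.mem_preimage, Set.mem_Iic, Finset.mem_univ, hA_def, Set.iInter_true, not_le,
        forall_const]
      exact ⟨fun h k => by exact_mod_cast h k, fun h k => by exact_mod_cast h k⟩
    rw [hB', aux_IE A hAm Finset.univ μ inferInstance]
    unfold survival nuK
    refine Finset.sum_congr rfl ?_
    intro L _
    rw [hbox_eq L, ← hCtoReal]
    simp [unitInterval.symm_symm]
  have hSnn : 0 ≤ survival C (fun k => unitInterval.symm (u k)) := by
    rw [hSB]; exact ENNReal.toReal_nonneg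
  -- positive-measure sets meet the countermonotonicity hyperplane
  have hne : ∀ T : Set (Cube d), MeasurableSet T → 0 < μ T →
      (T ∩ {a : Cube d | ∑ k ∈ K, g k (a k) = c}).Nonempty := by
    intro T hT hTpos
    rw [Set.nonempty_iff_ne_empty]
    intro hemp
    have hsub : {a : Cube d | ∑ k ∈ K, g k (a k) = c} ⊆ Tᶜ := by
      intro a haH haT
      exact Set.eq_empty_iff_forall_notMem.mp hemp a ⟨haT, haH⟩
    have hmono := measure_mono (μ := μ) hsub
    rw [hH, measure_compl hT (measure_ne_top μ T), measure_univ] at hmono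
    have hlt : (1 : ENNReal) - μ T < 1 :=
      ENNReal.sub_lt_self ENNReal.one_ne_top one_ne_zero hTpos.ne'
    exact absurd (lt_of_le_of_lt hmono hlt) (lt_irrefl 1)
  -- the two boxes cannot both have positive measure
  have hkey : ¬ (0 < C u ∧ 0 < survival C (fun k => unitInterval.symm (u k))) := by
    rintro ⟨h1, h2⟩
    have hA1 : 0 < μ (Set.Icc (0 : Cube d) u) := by
      rw [hbox u]; exact ENNReal.ofReal_pos.mpr h1
    have hB1 : 0 < μ B := by
      rw [hSB] at h2
      rcases (show (0:ENNReal) ≤ μ B from zero_le).lt_or_eq with h | h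
      · exact h
      · rw [← h] at h2; simp at h2
    obtain ⟨a, haIcc, haH⟩ := hne _ (hmIcc u) hA1
    obtain ⟨b, hbB, hbH⟩ := hne _ hBm hB1
    have hKne : K.Nonempty := Finset.card_pos.mp (by omega)
    have hlt : ∑ k ∈ K, g k (a k) < ∑ k ∈ K, g k (b k) := by
      refine Finset.sum_lt_sum_of_nonempty hKne ?_
      intro k hk
      exact (hg k hk).1 (lt_of_le_of_lt (haIcc.2 k) (hbB k))
    rw [haH, hbH] at hlt
    exact lt_irrefl c hlt
  have h0le : 0 ≤ min (C u) (survival C (fun k => unitInterval.symm (u k))) :=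
    le_min (hnonneg u) hSnn
  have hle0 : min (C u) (survival C (fun k => unitInterval.symm (u k))) ≤ 0 := by
    by_contra hcon
    push_neg at hcon
    exact hkey ⟨lt_of_lt_of_le hcon (min_le_left _ _),
      lt_of_lt_of_le hcon (min_le_right _ _)⟩
  exact le_antisymm hle0 h0le
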